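/- In the bidirectional structural model under Assumption 2, suppose σ > 0, γ1 > γ2², μxz ≠ 0, μyw ≠ 0 and βxy·βyx ≠ 1. With c = 1/(1 − βxy·βyx), λ1 = σ²c²(γ1 + 2βyx·γ2 + βyx²), λ2 = σ²c²(βxy²·γ1 + 2βxy·γ2 + 1), Probit coefficients ξxz = c·μxz/√λ1, ξxw = c·βyx·μyw/√λ1, ξyz = c·βxy·μxz/√λ2, ξyw = c·μyw/√λ2, and the ratios k1 = ξyz/ξxz and k2 = ξxw/ξyw, the product identity k1·k2 = βxy·βyx holds. -/

import Mathlib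

/-- the product of the Probit coefficient ratios equals the
product of the bidirectional causal effects under Assumption 2. -/
theorem stmt_9 (μx0 μy0 μxz μyw βxy βyx σ γ1 γ2 : ℝ)
    (hσ : 0 < σ) (hγ : γ2 ^ 2 < γ1)
    (hμxz : μxz ≠ 0) (hμyw : μyw ≠ 0) (hβ : βxy * βyx ≠ 1)
    (c lam1 lam2 ξxz ξxw ξyz ξyw k1 k2 : ℝ)
    (hc : c = 1 / (1 - βxy * βyx))
    (hlam1 : lam1 = σ ^ 2 * c ^ 2 * (γ1 + 2 * βyx * γ2 + βyx ^ 2))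
    (hlam2 : lam2 = σ ^ 2 * c ^ 2 * (βxy ^ 2 * γ1 + 2 * βxy * γ2 + 1))
    (hξxz : ξxz = c * μxz / Real.sqrt lam1)
    (hξxw : ξxw = c * βyx * μyw / Real.sqrt lam1)
    (hξyz : ξyz = c * βxy * μxz / Real.sqrt lam2)
    (hξyw : ξyw = c * μyw / Real.sqrt lam2)
    (hk1 : k1 = ξyz / ξxz) (hk2 : k2 = ξxw / ξyw) :
    k1 * k2 = βxy * βyx := by
  have hne : (1 : ℝ) - βxy * βyx ≠ 0 := by
    intro h; apply hβ; linarith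
  have hcne : c ≠ 0 := by
    rw [hc]; exact one_div_ne_zero hne
  have hc2 : 0 < c ^ 2 := by positivity
  have h1 : 0 < γ1 + 2 * βyx * γ2 + βyx ^ 2 := by nlinarith [sq_nonneg (γ2 + βyx)]
  have h2 : 0 < βxy ^ 2 * γ1 + 2 * βxy * γ2 + 1 := by
    rcases eq_or_ne βxy 0 with h | h
    · simp [h]
    · have : 0 < βxy ^ 2 := by positivity
      nlinarith [sq_nonneg (βxy * γ2 + 1)]
  have hl1 : 0 < lam1 := by rw [hlam1]; positivity
  have hl2 : 0 < lam2 := by rw [hlam2]; positivity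
  have hs1 : Real.sqrt lam1 ≠ 0 := ne_of_gt (Real.sqrt_pos.mpr hl1)
  have hs2 : Real.sqrt lam2 ≠ 0 := ne_of_gt (Real.sqrt_pos.mpr hl2)
  subst hk1 hk2 hξxz hξxw hξyz hξyw
  field_simp
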